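/- Let G be a connected graph and let G' be obtained from G by replacing every edge uv with two new vertices x1_uv, x2_uv and edges u x1_uv, u x2_uv, v x1_uv, v x2_uv (deleting the edge uv). Then G has a matching cut if and only if G' has a matching cut. -/

import Mathlib

open SimpleGraph

/-- `G` has a matching cut (1-cut): a partition into two non-empty parts with every
vertex having at most one neighbour on the other side. -/
def HasMatchingCut {V : Type*} (G : SimpleGraph V) : Prop :=
  ∃ B : Set V, B.Nonempty ∧ Bᶜ.Nonempty ∧
    (∀ v ∈ B, {u ∈ Bᶜ | G.Adj v u}.ncard ≤ 1) ∧
    (∀ v ∈ Bᶜ, {u ∈ B | G.Adj v u}.ncard ≤ 1)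

/-- The graph obtained from `G` by replacing every edge `uv` with two new
vertices `x¹_uv, x²_uv` adjacent to both `u` and `v` (the edge `uv` is deleted). -/
def Moshi {V : Type*} (G : SimpleGraph V) :
    SimpleGraph (V ⊕ ({e : Sym2 V // e ∈ G.edgeSet} × Fin 2)) :=
  SimpleGraph.fromRel (fun a b =>
    match a, b with
    | Sum.inl u, Sum.inr (e, _) => u ∈ (e : Sym2 V)
    | _, _ => False)

section Aux

open Sum

variable {V : Type*} {G : SimpleGraph V}

lemma moshi_adj_inl_inr (u : V) (x : {e : Sym2 V // e ∈ G.edgeSet} × Fin 2) :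
    (Moshi G).Adj (inl u) (inr x) ↔ u ∈ (x.1 : Sym2 V) := by
  obtain ⟨⟨e, he⟩, i⟩ := x
  simp [Moshi, fromRel_adj]

lemma moshi_adj_inr_inl (x : {e : Sym2 V // e ∈ G.edgeSet} × Fin 2) (u : V) :
    (Moshi G).Adj (inr x) (inl u) ↔ u ∈ (x.1 : Sym2 V) := by
  rw [adj_comm]; exact moshi_adj_inl_inr u x

lemma moshi_not_adj_inl_inl (u v : V) : ¬ (Moshi G).Adj (inl u) (inl v) := by
  simp [Moshi, fromRel_adj]

lemma moshi_not_adj_inr_inr (x y : {e : Sym2 V // e ∈ G.edgeSet} × Fin 2) :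
    ¬ (Moshi G).Adj (inr x) (inr y) := by
  obtain ⟨⟨e, he⟩, i⟩ := x; obtain ⟨⟨f, hf⟩, j⟩ := y
  simp [Moshi, fromRel_adj]

lemma sym2_exists_rep (e : Sym2 V) : ∃ u v, e = s(u, v) := by
  induction e using Sym2.ind with
  | _ u v => exact ⟨u, v, rfl⟩


lemma my_ncard_elim {α : Type*} {s : Set α} (hfin : s.Finite) (h : s.ncard ≤ 1)
    {a b : α} (ha : a ∈ s) (hb : b ∈ s) : a = b :=
  (Set.ncard_le_one_iff hfin).mp h ha hb

end Aux

theorem stmt7 {V : Type*} [Fintype V] (G : SimpleGraph V) (hG : G.Connected) :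
    HasMatchingCut G ↔ HasMatchingCut (Moshi G) := by
  classical
  constructor
  · rintro ⟨B, ⟨b, hb⟩, ⟨c, hc⟩, hB1, hB2⟩
    set D : Set (V ⊕ ({e : Sym2 V // e ∈ G.edgeSet} × Fin 2)) :=
      {a | Sum.elim (fun u => u ∈ B)
        (fun x => (∀ w ∈ (x.1 : Sym2 V), w ∈ B) ∨
          (x.2 = 0 ∧ ∃ w ∈ (x.1 : Sym2 V), w ∈ B)) a} with hD
    have hmemD : ∀ x, Sum.inr x ∈ D ↔ ((∀ w ∈ (x.1 : Sym2 V), w ∈ B) ∨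
        (x.2 = 0 ∧ ∃ w ∈ (x.1 : Sym2 V), w ∈ B)) := fun x => Iff.rfl
    have hmemDl : ∀ u, Sum.inl u ∈ D ↔ u ∈ B := fun u => Iff.rfl
    refine ⟨D, ⟨Sum.inl b, hb⟩, ⟨Sum.inl c, hc⟩, ?_, ?_⟩
    · rintro (u | x) hv
      · -- u ∈ B
        have hu : u ∈ B := hv
        rw [Set.ncard_le_one (Set.toFinite _)]
        rintro (w | x) ⟨hx1, hx2⟩
        · exact absurd hx2 (moshi_not_adj_inl_inl u w)
        rintro (w | y) ⟨hy1, hy2⟩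
        · exact absurd hy2 (moshi_not_adj_inl_inl u w)
        rw [moshi_adj_inl_inr] at hx2 hy2
        -- analyze x
        have key : ∀ (z : {e : Sym2 V // e ∈ G.edgeSet} × Fin 2),
            Sum.inr z ∈ Dᶜ → u ∈ (z.1 : Sym2 V) →
            ∃ v, v ∈ Bᶜ ∧ G.Adj u v ∧ (z.1 : Sym2 V) = s(u, v) ∧ z.2 = 1 := by
          intro z hz hu'
          rw [Set.mem_compl_iff, hmemD] at hz
          push_neg at hz
          obtain ⟨hnb, hz2⟩ := hz
          obtain ⟨v, hv⟩ := Sym2.mem_iff_exists.mp hu'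
          have hadj : G.Adj u v := G.mem_edgeSet.mp (hv ▸ z.1.2)
          have hvB : v ∉ B := by
            intro hvB
            obtain ⟨w, hw1, hw2⟩ := hnb
            rw [hv, Sym2.mem_iff] at hw1
            rcases hw1 with rfl | rfl
            · exact hw2 hu
            · exact hw2 hvB
          have hz0 : z.2 ≠ 0 := fun h0 => (hz2 h0 u hu' hu)
          exact ⟨v, hvB, hadj, hv, Fin.eq_one_of_ne_zero _ hz0⟩
        obtain ⟨v, hvB, hadj, he, hi⟩ := key x hx1 hx2
        obtain ⟨v', hvB', hadj', he', hi'⟩ := key y hy1 hy2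
        have hvv : v = v' := by
          have := my_ncard_elim (Set.toFinite _) (hB1 u hu)
            (a := v) (b := v') ⟨hvB, hadj⟩ ⟨hvB', hadj'⟩
          exact this
        subst hvv
        have : x.1 = y.1 := Subtype.ext (he.trans he'.symm)
        exact congrArg Sum.inr (Prod.ext this (hi.trans hi'.symm))
      · -- x is an edge-vertex in D
        rw [Set.ncard_le_one (Set.toFinite _)]
        have hx : Sum.inr x ∈ D := hv
        rw [hmemD] at hx
        have hex : ∃ z ∈ (x.1 : Sym2 V), z ∈ B := by
          obtain ⟨a, b', hab⟩ := sym2_exists_rep (x.1 : Sym2 V)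
          rcases hx with h | ⟨_, h⟩
          · exact ⟨a, by rw [hab]; exact Sym2.mem_mk_left a b', h a (by rw [hab]; exact Sym2.mem_mk_left a b')⟩
          · exact h
        obtain ⟨z, hz1, hz2⟩ := hex
        obtain ⟨y, hy⟩ := Sym2.mem_iff_exists.mp hz1
        rintro (w | p) ⟨hw1, hw2⟩
        · rw [moshi_adj_inr_inl] at hw2
          rintro (w' | p') ⟨hw1', hw2'⟩
          · rw [moshi_adj_inr_inl] at hw2'
            have hwB : w ∉ B := fun h => hw1 (hmemDl w |>.mpr h)
            have hwB' : w' ∉ B := fun h => hw1' (hmemDl w' |>.mpr h)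
            rw [hy, Sym2.mem_iff] at hw2 hw2'
            have : w = y := by rcases hw2 with rfl | rfl; exact absurd hz2 hwB; rfl
            have that : w' = y := by rcases hw2' with rfl | rfl; exact absurd hz2 hwB'; rfl
            rw [this, that]
          · exact absurd hw2' (moshi_not_adj_inr_inr x p')
        · exact absurd hw2 (moshi_not_adj_inr_inr x p)
    · rintro (u | x) hv
      · -- u ∈ Bᶜ
        have hu : u ∉ B := hv
        rw [Set.ncard_le_one (Set.toFinite _)]
        rintro (w | x) ⟨hx1, hx2⟩
        · exact absurd hx2 (moshi_not_adj_inl_inl u w)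
        rintro (w | y) ⟨hy1, hy2⟩
        · exact absurd hy2 (moshi_not_adj_inl_inl u w)
        rw [moshi_adj_inl_inr] at hx2 hy2
        have key : ∀ (z : {e : Sym2 V // e ∈ G.edgeSet} × Fin 2),
            Sum.inr z ∈ D → u ∈ (z.1 : Sym2 V) →
            ∃ v, v ∈ B ∧ G.Adj u v ∧ (z.1 : Sym2 V) = s(u, v) ∧ z.2 = 0 := by
          intro z hz hu'
          rw [hmemD] at hz
          obtain ⟨v, hv'⟩ := Sym2.mem_iff_exists.mp hu'
          have hadj : G.Adj u v := G.mem_edgeSet.mp (hv' ▸ z.1.2)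
          rcases hz with h | ⟨h0, w, hw1, hw2⟩
          · exact absurd (h u hu') hu
          · have hvB : v ∈ B := by
              rw [hv', Sym2.mem_iff] at hw1
              rcases hw1 with rfl | rfl
              · exact absurd hw2 hu
              · exact hw2
            exact ⟨v, hvB, hadj, hv', h0⟩
        obtain ⟨v, hvB, hadj, he, hi⟩ := key x hx1 hx2
        obtain ⟨v', hvB', hadj', he', hi'⟩ := key y hy1 hy2
        have hvv : v = v' := my_ncard_elim (Set.toFinite _) (hB2 u hu)
          ⟨hvB, hadj⟩ ⟨hvB', hadj'⟩
        subst hvv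
        have : x.1 = y.1 := Subtype.ext (he.trans he'.symm)
        exact congrArg Sum.inr (Prod.ext this (hi.trans hi'.symm))
      · -- x is an edge-vertex in Dᶜ
        rw [Set.ncard_le_one (Set.toFinite _)]
        have hx : Sum.inr x ∉ D := hv
        rw [hmemD] at hx
        push_neg at hx
        obtain ⟨z, hz1, hz2⟩ := hx.1
        obtain ⟨y, hy⟩ := Sym2.mem_iff_exists.mp hz1
        rintro (w | p) ⟨hw1, hw2⟩
        · rw [moshi_adj_inr_inl] at hw2
          rintro (w' | p') ⟨hw1', hw2'⟩
          · rw [moshi_adj_inr_inl] at hw2'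
            have hwB : w ∈ B := hw1
            have hwB' : w' ∈ B := hw1'
            rw [hy, Sym2.mem_iff] at hw2 hw2'
            have : w = y := by rcases hw2 with rfl | rfl; exact absurd hwB hz2; rfl
            have that : w' = y := by rcases hw2' with rfl | rfl; exact absurd hwB' hz2; rfl
            rw [this, that]
          · exact absurd hw2' (moshi_not_adj_inr_inr x p')
        · exact absurd hw2 (moshi_not_adj_inr_inr x p)
  · rintro ⟨D, hD1, hD2, hD3, hD4⟩
    set B : Set V := {u | Sum.inl u ∈ D} with hB
    -- nonemptiness helper for edge-vertices
    have edgeD : ∀ (x : {e : Sym2 V // e ∈ G.edgeSet} × Fin 2), Sum.inr x ∈ D →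
        ∃ u ∈ (x.1 : Sym2 V), u ∈ B := by
      intro x hx
      obtain ⟨u, v, huv⟩ := sym2_exists_rep (x.1 : Sym2 V)
      have hadj : G.Adj u v := G.mem_edgeSet.mp (huv ▸ x.1.2)
      by_contra h
      push_neg at h
      have hu : Sum.inl u ∈ Dᶜ := h u (by rw [huv]; exact Sym2.mem_mk_left u v)
      have hv : Sum.inl v ∈ Dᶜ := h v (by rw [huv]; exact Sym2.mem_mk_right u v)
      have := my_ncard_elim (Set.toFinite _) (hD3 _ hx)
        (a := Sum.inl u) (b := Sum.inl v)
        ⟨hu, (moshi_adj_inr_inl x u).mpr (by rw [huv]; exact Sym2.mem_mk_left u v)⟩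
        ⟨hv, (moshi_adj_inr_inl x v).mpr (by rw [huv]; exact Sym2.mem_mk_right u v)⟩
      exact hadj.ne (Sum.inl.inj this)
    have edgeDc : ∀ (x : {e : Sym2 V // e ∈ G.edgeSet} × Fin 2), Sum.inr x ∈ Dᶜ →
        ∃ u ∈ (x.1 : Sym2 V), u ∉ B := by
      intro x hx
      obtain ⟨u, v, huv⟩ := sym2_exists_rep (x.1 : Sym2 V)
      have hadj : G.Adj u v := G.mem_edgeSet.mp (huv ▸ x.1.2)
      by_contra h
      push_neg at h
      have hu : Sum.inl u ∈ D := h u (by rw [huv]; exact Sym2.mem_mk_left u v)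
      have hv : Sum.inl v ∈ D := h v (by rw [huv]; exact Sym2.mem_mk_right u v)
      have := my_ncard_elim (Set.toFinite _) (hD4 _ hx)
        (a := Sum.inl u) (b := Sum.inl v)
        ⟨hu, (moshi_adj_inr_inl x u).mpr (by rw [huv]; exact Sym2.mem_mk_left u v)⟩
        ⟨hv, (moshi_adj_inr_inl x v).mpr (by rw [huv]; exact Sym2.mem_mk_right u v)⟩
      exact hadj.ne (Sum.inl.inj this)
    refine ⟨B, ?_, ?_, ?_, ?_⟩
    · obtain ⟨a, ha⟩ := hD1
      rcases a with u | x
      · exact ⟨u, ha⟩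
      · obtain ⟨u, _, hu⟩ := edgeD x ha
        exact ⟨u, hu⟩
    · obtain ⟨a, ha⟩ := hD2
      rcases a with u | x
      · exact ⟨u, ha⟩
      · obtain ⟨u, _, hu⟩ := edgeDc x ha
        exact ⟨u, hu⟩
    · intro u hu
      rw [Set.ncard_le_one (Set.toFinite _)]
      rintro v ⟨hv1, hv2⟩ v' ⟨hv1', hv2'⟩
      -- for each crossing edge there is an edge-vertex on the other side of u
      have key : ∀ w, w ∉ B → (hadj : G.Adj u w) →
          ∃ i : Fin 2, Sum.inr (⟨s(u, w), G.mem_edgeSet.mpr hadj⟩, i) ∈ Dᶜ := by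
        intro w hw hadj
        by_contra h
        push_neg at h
        have h0 : Sum.inr ((⟨s(u, w), G.mem_edgeSet.mpr hadj⟩, (0 : Fin 2))) ∈ D :=
          not_not.mp (h 0)
        have h1 : Sum.inr ((⟨s(u, w), G.mem_edgeSet.mpr hadj⟩, (1 : Fin 2))) ∈ D :=
          not_not.mp (h 1)
        have hwD : Sum.inl w ∈ Dᶜ := hw
        have := my_ncard_elim (Set.toFinite _) (hD4 _ hwD)
          ⟨h0, (moshi_adj_inl_inr w _).mpr (Sym2.mem_mk_right u w)⟩
          ⟨h1, (moshi_adj_inl_inr w _).mpr (Sym2.mem_mk_right u w)⟩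
        simpa using congrArg (fun a => Sum.elim (fun _ => (0 : Fin 2)) Prod.snd a) this
      obtain ⟨i, hi⟩ := key v hv1 hv2
      obtain ⟨i', hi'⟩ := key v' hv1' hv2'
      have := my_ncard_elim (Set.toFinite _) (hD3 _ hu)
        ⟨hi, (moshi_adj_inl_inr u _).mpr (Sym2.mem_mk_left u v)⟩
        ⟨hi', (moshi_adj_inl_inr u _).mpr (Sym2.mem_mk_left u v')⟩
      have hee : s(u, v) = s(u, v') := congrArg Subtype.val
        (congrArg Prod.fst (Sum.inr.inj this))
      exact Sym2.congr_right.mp hee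
    · intro u hu
      rw [Set.ncard_le_one (Set.toFinite _)]
      rintro v ⟨hv1, hv2⟩ v' ⟨hv1', hv2'⟩
      have huD : Sum.inl u ∈ Dᶜ := hu
      have key : ∀ w, w ∈ B → (hadj : G.Adj u w) →
          ∃ i : Fin 2, Sum.inr (⟨s(u, w), G.mem_edgeSet.mpr hadj⟩, i) ∈ D := by
        intro w hw hadj
        by_contra h
        push_neg at h
        have hwD : Sum.inl w ∈ D := hw
        have := my_ncard_elim (Set.toFinite _) (hD3 _ hwD)
          ⟨h 0, (moshi_adj_inl_inr w _).mpr (Sym2.mem_mk_right u w)⟩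
          ⟨h 1, (moshi_adj_inl_inr w _).mpr (Sym2.mem_mk_right u w)⟩
        simpa using congrArg (fun a => Sum.elim (fun _ => (0 : Fin 2)) Prod.snd a) this
      obtain ⟨i, hi⟩ := key v hv1 hv2
      obtain ⟨i', hi'⟩ := key v' hv1' hv2'
      have := my_ncard_elim (Set.toFinite _) (hD4 _ huD)
        ⟨hi, (moshi_adj_inl_inr u _).mpr (Sym2.mem_mk_left u v)⟩
        ⟨hi', (moshi_adj_inl_inr u _).mpr (Sym2.mem_mk_left u v')⟩
      have hee : s(u, v) = s(u, v') := congrArg Subtype.val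
        (congrArg Prod.fst (Sum.inr.inj this))
      exact Sym2.congr_right.mp hee
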